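/- Let ε > 0 and let (x,y) : [0,∞) → ℝ² be a differentiable solution of x' = max(x² − y, 0), y' = −ε with y(0) ≥ x(0)². Set t* := (y(0) − x(0)²)/ε. Then for all t ∈ [0, t*] one has x(t) = x(0) and y(t) = y(0) − εt; in particular (x(t*), y(t*)) = (x(0), x(0)²). Moreover, for all t > t* one has y(t) < x(t)². That is, every trajectory starting in the two-dimensional critical manifold C₀ moves vertically downwards, exits C₀ at the point (x(0), x(0)²) on the parabola, and never re-enters C₀. -/

import Mathlib

open scoped Topology


/-- For the `h = 0` fold system `x' = max(x² - y, 0)`, `y' = -ε`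
with `y 0 ≥ (x 0)²`, setting `t* := (y 0 - (x 0)²)/ε`: on `[0, t*]` the trajectory
moves vertically downwards, `x t = x 0` and `y t = y 0 - ε t` (so it exits the
critical manifold `C₀` at `(x 0, (x 0)²)`), and for all `t > t*` one has
`y t < (x t)²`, i.e. the trajectory never re-enters `C₀`. -/
theorem fold_h_zero_vertical_exit
    (ε : ℝ) (hε : 0 < ε) (x y : ℝ → ℝ)
    (hx : ∀ t : ℝ, 0 ≤ t → HasDerivAt x (max ((x t) ^ 2 - y t) 0) t)
    (hy : ∀ t : ℝ, 0 ≤ t → HasDerivAt y (-ε) t)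
    (h0 : (x 0) ^ 2 ≤ y 0) :
    (∀ t ∈ Set.Icc (0 : ℝ) ((y 0 - (x 0) ^ 2) / ε),
        x t = x 0 ∧ y t = y 0 - ε * t) ∧
    (∀ t : ℝ, (y 0 - (x 0) ^ 2) / ε < t → y t < (x t) ^ 2) := by
  set T : ℝ := (y 0 - (x 0) ^ 2) / ε with hTdef
  have hT0 : 0 ≤ T := div_nonneg (by linarith) hε.le
  have hεT : ε * T = y 0 - (x 0) ^ 2 := by
    rw [hTdef]; field_simp
  -- y is linear for all t ≥ 0
  have hyf : ∀ t : ℝ, 0 ≤ t → y t = y 0 - ε * t := by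
    intro t ht
    have hg : ∀ s : ℝ, HasDerivAt (fun u : ℝ => y 0 - ε * u) (-ε) s := by
      intro s
      simpa using ((hasDerivAt_id s).const_mul ε).const_sub (y 0)
    have := eq_of_has_deriv_right_eq (f := y) (g := fun u : ℝ => y 0 - ε * u)
      (f' := fun _ => -ε) (a := 0) (b := t)
      (fun s hs => (hy s hs.1).hasDerivWithinAt)
      (fun s _ => (hg s).hasDerivWithinAt)
      (fun s hs => (hy s hs.1).continuousAt.continuousWithinAt)
      (fun s _ => (hg s).continuousAt.continuousWithinAt)
      (by simp)
    simpa using this t (Set.mem_Icc.mpr ⟨ht, le_refl t⟩)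
  -- x is constant on [0, T]
  have hxcont : ContinuousOn x (Set.Icc 0 T) :=
    fun s hs => (hx s hs.1).continuousAt.continuousWithinAt
  obtain ⟨C, hC⟩ := isCompact_Icc.exists_bound_of_continuousOn
    (f := fun s => x s + x 0) (hxcont.add continuousOn_const)
  set K : ℝ := max C 0 with hKdef
  have hK0 : 0 ≤ K := le_max_right _ _
  have hxc : ∀ t ∈ Set.Icc (0 : ℝ) T, x t = x 0 := by
    have key := norm_le_gronwallBound_of_norm_deriv_right_le
      (f := fun s => x s - x 0) (f' := fun s => max ((x s) ^ 2 - y s) 0)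
      (δ := 0) (K := K) (ε := 0) (a := 0) (b := T)
      (hxcont.sub continuousOn_const)
      (fun s hs => ((hx s hs.1).sub_const (x 0)).hasDerivWithinAt)
      (by simp)
      (by
        intro s hs
        have hys : y s = y 0 - ε * s := hyf s hs.1
        have hεs : ε * s ≤ y 0 - (x 0) ^ 2 := by
          have : ε * s ≤ ε * T := mul_le_mul_of_nonneg_left hs.2.le hε.le
          linarith [hεT]
        have habs : |x s - x 0| * |x s + x 0| ≤ |x s - x 0| * K := by
          have h3 : |x s + x 0| ≤ K := le_trans (hC s ⟨hs.1, hs.2.le⟩) (le_max_left _ _)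
          exact mul_le_mul_of_nonneg_left h3 (abs_nonneg _)
        have h2 : (x s) ^ 2 - (x 0) ^ 2 ≤ |x s - x 0| * |x s + x 0| := by
          calc (x s) ^ 2 - (x 0) ^ 2 = (x s - x 0) * (x s + x 0) := by ring
            _ ≤ |(x s - x 0) * (x s + x 0)| := le_abs_self _
            _ = |x s - x 0| * |x s + x 0| := abs_mul _ _
        have h1 : (x s) ^ 2 - y s ≤ K * ‖x s - x 0‖ := by
          rw [Real.norm_eq_abs]
          have : (x s) ^ 2 - y s ≤ (x s) ^ 2 - (x 0) ^ 2 := by rw [hys]; linarith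
          calc (x s) ^ 2 - y s ≤ |x s - x 0| * K := by linarith
            _ = K * |x s - x 0| := mul_comm _ _
        rw [Real.norm_eq_abs, abs_of_nonneg (le_max_right _ _)]
        have hnn : (0 : ℝ) ≤ K * ‖x s - x 0‖ := mul_nonneg hK0 (norm_nonneg _)
        rw [add_zero]
        exact max_le h1 hnn)
    intro t ht
    have h := key t ht
    rw [gronwallBound_ε0_δ0] at h
    have := norm_le_zero_iff.mp h
    linarith [sub_eq_zero.mp this]
  have part1 : ∀ t ∈ Set.Icc (0 : ℝ) T, x t = x 0 ∧ y t = y 0 - ε * t :=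
    fun t ht => ⟨hxc t ht, hyf t ht.1⟩
  refine ⟨part1, ?_⟩
  -- Part 2
  have hvT0 : y T - (x T) ^ 2 = 0 := by
    have h1 := hyf T hT0
    have h2 := hxc T ⟨hT0, le_refl T⟩
    rw [h1, h2]; linarith [hεT]
  -- derivative of v := y - x² is -ε at any zero of v
  have hdv : ∀ r : ℝ, 0 ≤ r → y r - (x r) ^ 2 = 0 →
      HasDerivAt (fun s => y s - (x s) ^ 2) (-ε) r := by
    intro r hr hvr
    have hmax : max ((x r) ^ 2 - y r) 0 = 0 := by
      have : (x r) ^ 2 - y r = 0 := by linarith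
      simp [this]
    have hx' : HasDerivAt x 0 r := hmax ▸ hx r hr
    have := (hy r hr).sub (hx'.pow 2)
    exact this.congr_deriv (by simp)
  intro t ht
  by_contra hcon
  push_neg at hcon
  -- there is u > T with v < 0 on (T, u)
  have hdT := hdv T hT0 hvT0
  have hslopeT : Filter.Tendsto (slope (fun s => y s - (x s) ^ 2) T) (𝓝[>] T) (𝓝 (-ε)) := by
    have h := (hdT.hasDerivWithinAt (s := Set.Ioi T))
    rw [hasDerivWithinAt_iff_tendsto_slope] at h
    rwa [Set.diff_singleton_eq_self (by simp)] at h
  have hev : ∀ᶠ s in 𝓝[>] T, y s - (x s) ^ 2 < 0 := by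
    filter_upwards [hslopeT.eventually_lt_const (show -ε < 0 by linarith),
      self_mem_nhdsWithin] with s hs hs'
    have hsT : (0 : ℝ) < s - T := sub_pos.mpr hs'
    have hs2 : (y s - (x s) ^ 2 - (y T - (x T) ^ 2)) / (s - T) < 0 := by
      simpa [slope_def_field] using hs
    rw [hvT0, sub_zero] at hs2
    rcases div_neg_iff.mp hs2 with h | h
    · linarith [h.2]
    · exact h.1
  obtain ⟨u, hu, huv⟩ := mem_nhdsGT_iff_exists_Ioo_subset.mp hev
  -- first re-entry point r
  set S : Set ℝ := {s : ℝ | s ∈ Set.Ioc T t ∧ 0 ≤ y s - (x s) ^ 2} with hSdef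
  have htS : t ∈ S := ⟨⟨ht, le_refl t⟩, by linarith⟩
  have hne : S.Nonempty := ⟨t, htS⟩
  have hbdd : BddBelow S := ⟨T, fun s hs => hs.1.1.le⟩
  set r : ℝ := sInf S with hrdef
  have hrS : ∀ s ∈ S, u ≤ s := by
    intro s hs
    by_contra hsu
    push_neg at hsu
    exact absurd hs.2 (not_le.mpr (huv ⟨hs.1.1, hsu⟩))
  have hTr : T < r := lt_of_lt_of_le hu (le_csInf hne hrS)
  have hr0 : 0 ≤ r := le_trans hT0 hTr.le
  have hrt : r ≤ t := csInf_le hbdd htS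
  -- v < 0 strictly before r
  have hneg : ∀ s ∈ Set.Ioo T r, y s - (x s) ^ 2 < 0 := by
    intro s hs
    by_contra hns
    push_neg at hns
    exact notMem_of_lt_csInf hs.2 hbdd ⟨⟨hs.1, le_trans hs.2.le hrt⟩, hns⟩
  have hvcont : ContinuousAt (fun s => y s - (x s) ^ 2) r :=
    (hy r hr0).continuousAt.sub ((hx r hr0).continuousAt.pow 2)
  -- v r = 0
  have hvr0 : y r - (x r) ^ 2 = 0 := by
    have hle : y r - (x r) ^ 2 ≤ 0 := by
      have htend : Filter.Tendsto (fun s => y s - (x s) ^ 2) (𝓝[<] r)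
          (𝓝 (y r - (x r) ^ 2)) := hvcont.continuousWithinAt.tendsto
      refine le_of_tendsto htend ?_
      filter_upwards [Ioo_mem_nhdsLT_of_mem (Set.mem_Ioc.mpr ⟨hTr, le_refl r⟩)] with s hs
      exact (hneg s hs).le
    have hge : 0 ≤ y r - (x r) ^ 2 := by
      have hclos : r ∈ closure S := csInf_mem_closure hne hbdd
      have hNB : (𝓝[S] r).NeBot := mem_closure_iff_nhdsWithin_neBot.mp hclos
      have htend : Filter.Tendsto (fun s => y s - (x s) ^ 2) (𝓝[S] r)
          (𝓝 (y r - (x r) ^ 2)) := hvcont.continuousWithinAt.tendsto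
      refine ge_of_tendsto htend ?_
      filter_upwards [self_mem_nhdsWithin] with s hs
      exact hs.2
    linarith
  -- slope of v at r from the left tends to -ε but is eventually nonneg
  have hdr := hdv r hr0 hvr0
  have hslope : Filter.Tendsto (slope (fun s => y s - (x s) ^ 2) r) (𝓝[<] r) (𝓝 (-ε)) := by
    have h := (hdr.hasDerivWithinAt (s := Set.Iio r))
    rw [hasDerivWithinAt_iff_tendsto_slope] at h
    rwa [Set.diff_singleton_eq_self (by simp)] at h
  have hge : (0 : ℝ) ≤ -ε := by
    refine ge_of_tendsto hslope ?_
    filter_upwards [Ioo_mem_nhdsLT_of_mem (Set.mem_Ioc.mpr ⟨hTr, le_refl r⟩)] with s hs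
    have hvs : y s - (x s) ^ 2 < 0 := hneg s hs
    have hsr : s - r < 0 := sub_neg.mpr hs.2
    have : (y s - (x s) ^ 2 - (y r - (x r) ^ 2)) / (s - r) =
        slope (fun s => y s - (x s) ^ 2) r s := by
      rw [slope_def_field]
    rw [← this, hvr0, sub_zero]
    exact le_of_lt (div_pos_of_neg_of_neg hvs hsr)
  linarith
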